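/- Suppose A is bounded, S' is bounded, and |−ξ² + (S'(x)/2 + λ)² + A(x)²| ≥ ε for all (x,ξ) ∈ ℝ², for some ε > 0. Then there exists a constant C = C(ε, λ, ‖S'‖_∞, ‖A‖_∞) such that the matrix (p(x,ξ) − λI) is invertible for all (x,ξ) and ‖(p(x,ξ) − λI)⁻¹‖ ≤ C(1 + |ξ|)⁻¹ for all (x,ξ) ∈ ℝ². -/

import Mathlib

open Complex Matrix

/-- The symbol of the Zakharov–Shabat operator. -/
noncomputable def zsSymbol (A : ℝ → ℝ) (S' : ℝ → ℝ) (x ξ : ℝ) : Matrix (Fin 2) (Fin 2) ℂ :=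
  !![-(ξ : ℂ) - (S' x) / 2, -Complex.I * A x;
     -Complex.I * A x, (ξ : ℂ) - (S' x) / 2]

private lemma abs_sub_le'' (u v : ℂ) : ‖u - v‖ ≤ ‖u‖ + ‖v‖ := by
  exact norm_sub_le u v

set_option maxHeartbeats 1600000 in
theorem stmt_10 (A S : ℝ → ℝ) (hApos : ∀ x, 0 < A x)
    (MA : ℝ) (hMA : ∀ x, |A x| ≤ MA)
    (MS : ℝ) (hMS : ∀ x, |deriv S x| ≤ MS)
    (lam : ℂ) (ε : ℝ) (hε : 0 < ε)
    (hlow : ∀ x ξ : ℝ,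
      ε ≤ ‖-(ξ : ℂ)^2 + ((deriv S x / 2 : ℝ) + lam)^2 + ((A x : ℝ) : ℂ)^2‖) :
    ∃ C : ℝ, 0 < C ∧ ∀ x ξ : ℝ,
      IsUnit (zsSymbol A (deriv S) x ξ - lam • (1 : Matrix (Fin 2) (Fin 2) ℂ))
      ∧ ∀ i j : Fin 2,
          ‖(((zsSymbol A (deriv S) x ξ - lam • (1 : Matrix (Fin 2) (Fin 2) ℂ))⁻¹) i j)‖
            ≤ C * (1 + |ξ|)⁻¹ := by
  have hMA0 : 0 ≤ MA := le_trans (abs_nonneg _) (hMA 0)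
  have hMS0 : 0 ≤ MS := le_trans (abs_nonneg _) (hMS 0)
  have hlam0 : 0 ≤ ‖lam‖ := norm_nonneg lam
  obtain ⟨K, hKdef⟩ : ∃ K : ℝ, K = MS / 2 + ‖lam‖ + MA + 1 := ⟨_, rfl⟩
  have hK1 : 1 ≤ K := by rw [hKdef]; linarith
  have hK0 : 0 < K := lt_of_lt_of_le one_pos hK1
  have hs2 : (1:ℝ) ≤ Real.sqrt 2 := by
    rw [show (1:ℝ) = Real.sqrt 1 by simp]
    exact Real.sqrt_le_sqrt (by norm_num)
  have hs2sq : Real.sqrt 2 ^ 2 = 2 := Real.sq_sqrt (by norm_num)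
  obtain ⟨C, hCdef⟩ : ∃ C : ℝ,
      C = max ((Real.sqrt 2 * K + K) * (1 + Real.sqrt 2 * K) / ε) (4 * (1 + K)) := ⟨_, rfl⟩
  have hC0 : 0 < C := by
    rw [hCdef]
    exact lt_of_lt_of_le (by nlinarith) (le_max_right _ _)
  refine ⟨C, hC0, ?_⟩
  intro x ξ
  obtain ⟨s, hsdef⟩ : ∃ s : ℝ, s = deriv S x := ⟨_, rfl⟩
  have hsMS : |s| ≤ MS := hsdef ▸ hMS x
  obtain ⟨a, hadef⟩ : ∃ a : ℂ, a = ((s / 2 : ℝ) : ℂ) + lam := ⟨_, rfl⟩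
  obtain ⟨D, hDdef⟩ : ∃ D : ℂ, D = -(ξ:ℂ)^2 + a^2 + ((A x : ℝ) : ℂ)^2 := ⟨_, rfl⟩
  have hDlow : ε ≤ ‖D‖ := by
    rw [hDdef, hadef, hsdef]
    exact hlow x ξ
  have hDpos : 0 < ‖D‖ := lt_of_lt_of_le hε hDlow
  have hD0 : D ≠ 0 := by
    intro h; rw [h] at hDpos; simp at hDpos
  have hM : zsSymbol A (deriv S) x ξ - lam • (1 : Matrix (Fin 2) (Fin 2) ℂ)
      = !![-(ξ:ℂ) - (s:ℂ)/2 - lam, -Complex.I * A x;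
           -Complex.I * A x, (ξ:ℂ) - (s:ℂ)/2 - lam] := by
    rw [hsdef]
    ext i j
    fin_cases i <;> fin_cases j <;>
      simp [zsSymbol, Matrix.smul_apply, Matrix.one_apply] <;> ring
  have hdet : (zsSymbol A (deriv S) x ξ - lam • (1 : Matrix (Fin 2) (Fin 2) ℂ)).det = D := by
    rw [hM, Matrix.det_fin_two_of, hDdef, hadef]
    push_cast
    linear_combination (-((A x : ℂ)^2)) * Complex.I_sq
  have hUnit : IsUnit (zsSymbol A (deriv S) x ξ - lam • (1 : Matrix (Fin 2) (Fin 2) ℂ)) := by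
    rw [Matrix.isUnit_iff_isUnit_det, hdet]
    exact isUnit_iff_ne_zero.mpr hD0
  refine ⟨hUnit, ?_⟩
  have hs2' : ‖(s:ℂ)/2‖ ≤ MS/2 := by
    rw [norm_div, Complex.norm_real, Real.norm_eq_abs, Complex.norm_two]
    linarith
  have habsa : ‖a‖ ≤ MS / 2 + ‖lam‖ := by
    rw [hadef]
    refine (norm_add_le _ _).trans ?_
    rw [Complex.norm_real, Real.norm_eq_abs]
    have : |s / 2| ≤ MS / 2 := by
      rw [abs_div, _root_.abs_two]
      linarith
    linarith
  have hA2 : ‖((A x : ℝ) : ℂ)^2‖ ≤ MA^2 := by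
    rw [norm_pow, Complex.norm_real, Real.norm_eq_abs]
    have := hMA x
    nlinarith [abs_nonneg (A x)]
  have hDge : ξ^2 - K^2 ≤ ‖D‖ := by
    have e : (ξ:ℂ)^2 = (a^2 + ((A x:ℝ):ℂ)^2) - D := by rw [hDdef]; ring
    have h1 : ‖(ξ:ℂ)^2‖ ≤ ‖a^2 + ((A x:ℝ):ℂ)^2‖ + ‖D‖ := by
      rw [e]; exact abs_sub_le'' _ _
    have h2 : ‖a^2 + ((A x:ℝ):ℂ)^2‖ ≤ K^2 := by
      refine (norm_add_le _ _).trans ?_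
      have h4 : ‖a^2‖ ≤ (MS/2 + ‖lam‖)^2 := by
        rw [norm_pow]
        have h0 := norm_nonneg a
        nlinarith
      rw [hKdef]
      nlinarith
    have h3 : ‖(ξ:ℂ)^2‖ = ξ^2 := by
      rw [norm_pow, Complex.norm_real, Real.norm_eq_abs, _root_.sq_abs]
    rw [h3] at h1
    linarith
  have hxi0 : 0 < 1 + |ξ| := by positivity
  have hkey : (|ξ| + K) * (1 + |ξ|) ≤ C * ‖D‖ := by
    by_cases hcase : |ξ| ≤ Real.sqrt 2 * K
    · have h1 : (|ξ| + K) * (1 + |ξ|) ≤ (Real.sqrt 2 * K + K) * (1 + Real.sqrt 2 * K) := by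
        have h0 : 0 ≤ |ξ| := abs_nonneg ξ
        exact mul_le_mul (by linarith) (by linarith) (by positivity) (by positivity)
      have h2 : (Real.sqrt 2 * K + K) * (1 + Real.sqrt 2 * K)
          = ((Real.sqrt 2 * K + K) * (1 + Real.sqrt 2 * K) / ε) * ε := by
        field_simp
      have h3 : ((Real.sqrt 2 * K + K) * (1 + Real.sqrt 2 * K) / ε) * ε
          ≤ C * ‖D‖ := by
        refine mul_le_mul ?_ hDlow hε.le hC0.le
        rw [hCdef]; exact le_max_left _ _
      linarith
    · push_neg at hcase
      have hpos2 : 0 ≤ Real.sqrt 2 * K := by positivity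
      have hxi1 : 1 ≤ |ξ| := le_trans (by nlinarith) hcase.le
      have hxi2 : 2 * K^2 ≤ ξ^2 := by
        have h5 : (Real.sqrt 2 * K)^2 ≤ |ξ|^2 := pow_le_pow_left₀ hpos2 hcase.le 2
        rw [mul_pow, hs2sq, _root_.sq_abs] at h5
        linarith
      have hDhalf : ξ^2 / 2 ≤ ‖D‖ := by nlinarith
      have hC4 : 4 * (1 + K) ≤ C := by rw [hCdef]; exact le_max_right _ _
      have hLHS : (|ξ| + K) * (1 + |ξ|) ≤ 2 * (1 + K) * ξ^2 := by
        have h0 : 0 ≤ |ξ| := abs_nonneg ξ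
        have hk : K ≤ K * |ξ| := by nlinarith
        have e1 : |ξ| + K ≤ (1 + K) * |ξ| := by nlinarith
        have e2 : 1 + |ξ| ≤ 2 * |ξ| := by linarith
        calc (|ξ| + K) * (1 + |ξ|) ≤ ((1 + K) * |ξ|) * (2 * |ξ|) :=
              mul_le_mul e1 e2 (by positivity) (by positivity)
          _ = 2 * (1 + K) * |ξ|^2 := by ring
          _ = 2 * (1 + K) * ξ^2 := by rw [_root_.sq_abs]
      calc (|ξ| + K) * (1 + |ξ|) ≤ 2 * (1 + K) * ξ^2 := hLHS
        _ = 4 * (1 + K) * (ξ^2 / 2) := by ring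
        _ ≤ C * ‖D‖ := mul_le_mul hC4 hDhalf (by positivity) hC0.le
  have hbound : ∀ z : ℂ, ‖z‖ ≤ |ξ| + K →
      ‖D⁻¹ * z‖ ≤ C * (1 + |ξ|)⁻¹ := by
    intro z hz
    rw [norm_mul, norm_inv, inv_mul_eq_div, div_le_iff₀ hDpos]
    calc ‖z‖ = ‖z‖ * (1 + |ξ|) * (1 + |ξ|)⁻¹ := by
          field_simp
      _ ≤ C * ‖D‖ * (1 + |ξ|)⁻¹ := by
          have h1 : ‖z‖ * (1 + |ξ|) ≤ C * ‖D‖ :=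
            le_trans (mul_le_mul_of_nonneg_right hz hxi0.le) hkey
          exact mul_le_mul_of_nonneg_right h1 (by positivity)
      _ = C * (1 + |ξ|)⁻¹ * ‖D‖ := by ring
  have hinv : (zsSymbol A (deriv S) x ξ - lam • (1 : Matrix (Fin 2) (Fin 2) ℂ))⁻¹
      = D⁻¹ • !![(ξ:ℂ) - (s:ℂ)/2 - lam, -(-Complex.I * A x);
                 -(-Complex.I * A x), -(ξ:ℂ) - (s:ℂ)/2 - lam] := by
    rw [Matrix.inv_def, hdet, hM, Matrix.adjugate_fin_two_of, Ring.inverse_eq_inv']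
  intro i j
  rw [hinv]
  have hAb : ‖-(-Complex.I * (A x : ℂ))‖ ≤ |ξ| + K := by
    rw [norm_neg, norm_mul, norm_neg, Complex.norm_I, one_mul, Complex.norm_real, Real.norm_eq_abs]
    have := hMA x
    have := abs_nonneg ξ
    rw [hKdef]
    linarith
  have hd1 : ‖(ξ:ℂ) - (s:ℂ)/2 - lam‖ ≤ |ξ| + K := by
    refine (abs_sub_le'' _ _).trans ?_
    have h1 : ‖(ξ:ℂ) - (s:ℂ)/2‖ ≤ |ξ| + MS/2 := by
      refine (abs_sub_le'' _ _).trans ?_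
      rw [Complex.norm_real, Real.norm_eq_abs]
      linarith
    rw [hKdef]
    linarith
  have hd2 : ‖-(ξ:ℂ) - (s:ℂ)/2 - lam‖ ≤ |ξ| + K := by
    refine (abs_sub_le'' _ _).trans ?_
    have h1 : ‖-(ξ:ℂ) - (s:ℂ)/2‖ ≤ |ξ| + MS/2 := by
      refine (abs_sub_le'' _ _).trans ?_
      rw [norm_neg, Complex.norm_real, Real.norm_eq_abs]
      linarith
    rw [hKdef]
    linarith
  fin_cases i <;> fin_cases j <;>
    simp only [Matrix.smul_apply, smul_eq_mul, Matrix.cons_val', Matrix.cons_val_zero,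
      Matrix.cons_val_one, Matrix.head_cons, Matrix.empty_val', Matrix.cons_val_fin_one,
      Matrix.head_fin_const]
  · exact hbound _ hd1
  · exact hbound _ hAb
  · exact hbound _ hAb
  · exact hbound _ hd2
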